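/- Let W = [[a,b],[c,d]] ∈ SL(2,ℂ) with c ≠ 0, and suppose the image of the lower half plane under the Möbius transformation z ↦ (az+b)/(cz+d) is a disk contained in the upper half plane {Im z > 0}. Then Im(c·conj(d)) > 0 and Re(b·conj(c) − a·conj(d)) ≥ 1. -/

import Mathlib

open Complex ComplexConjugate

lemma key_real (α β γ δ : ℝ) (hid : γ^2 + β^2 - 4*α*δ = 1)
    (H : ∀ x y : ℝ, y < 0 → 0 < α*(x^2+y^2) + β*x + γ*y + δ) : γ ≤ -1 := by
  have hα : 0 ≤ α := by
    by_contra h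
    push_neg at h
    set S : ℝ := 1 + |β| + |γ| + |δ| + |α| with hS
    set x : ℝ := max 1 (S / (-α)) with hx
    have hx1 : 1 ≤ x := le_max_left _ _
    have hx2 : S / (-α) ≤ x := le_max_right _ _
    have hαx : α * x ≤ -S := by
      have h0 : 0 < -α := by linarith
      rw [div_le_iff₀ h0] at hx2
      nlinarith
    have hmain := H x (-1) (by norm_num)
    have h1 : α * x * x ≤ -S * x :=
      mul_le_mul_of_nonneg_right hαx (by linarith)
    have h2 : β * x ≤ |β| * x :=
      mul_le_mul_of_nonneg_right (le_abs_self β) (by linarith)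
    have h3 : (1 + |γ| + |δ| + |α|) * 1 ≤ (1 + |γ| + |δ| + |α|) * x :=
      mul_le_mul_of_nonneg_left hx1 (by positivity)
    have ha' : α ≤ |α| := le_abs_self α
    have hg' : -γ ≤ |γ| := neg_le_abs γ
    have hd' : δ ≤ |δ| := le_abs_self δ
    nlinarith
  rcases eq_or_lt_of_le hα with hα0 | hαpos
  · have hα0 : α = 0 := hα0.symm
    subst hα0
    have hβ : β = 0 := by
      by_contra hβ
      have hmain := H ((γ - δ - 1)/β) (-1) (by norm_num)
      have : β * ((γ - δ - 1)/β) = γ - δ - 1 := mul_div_cancel₀ _ hβ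
      nlinarith
    subst hβ
    have hγle : γ ≤ 0 := by
      by_contra hγ
      push_neg at hγ
      have hyneg : -((|δ|+1)/γ) < 0 := by
        have : 0 < (|δ|+1)/γ := by positivity
        linarith
      have hmain := H 0 _ hyneg
      have : γ * ((|δ|+1)/γ) = |δ|+1 := mul_div_cancel₀ _ (ne_of_gt hγ)
      have hd' : δ ≤ |δ| := le_abs_self δ
      nlinarith
    nlinarith
  · by_contra hγ
    push_neg at hγ
    have h2α : 0 < 2*α := by linarith
    set L : ℝ := (-γ - 1)/(2*α) with hL
    set U : ℝ := (-γ + 1)/(2*α) with hU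
    set x : ℝ := -β/(2*α) with hx
    have hLneg : L < 0 := div_neg_of_neg_of_pos (by linarith) h2α
    have hLU : L < U := by
      rw [hL, hU, div_lt_div_iff₀ h2α h2α]; nlinarith
    set y : ℝ := (L + min U 0)/2 with hy
    have hM1 : L < min U 0 := lt_min hLU hLneg
    have hM2 : min U 0 ≤ 0 := min_le_right _ _
    have hM3 : min U 0 ≤ U := min_le_left _ _
    have hyneg : y < 0 := by rw [hy]; linarith
    have hyL : L < y := by rw [hy]; linarith
    have hyU : y < U := by rw [hy]; linarith
    have eL : 2*α*L = -γ - 1 := by rw [hL]; field_simp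
    have eU : 2*α*U = -γ + 1 := by rw [hU]; field_simp
    have hval : (4*α) * (α*(x^2+y^2) + β*x + γ*y + δ)
        = ((2*α*y + γ) - 1) * ((2*α*y + γ) + 1) := by
      rw [hx]
      field_simp
      linear_combination (-4) * hid
    have hmain := H x y hyneg
    have h1 : 0 < (4*α) * (α*(x^2+y^2) + β*x + γ*y + δ) := by positivity
    rw [hval] at h1
    have h2 : 2*α*y < 2*α*U := by nlinarith
    have h3 : 2*α*L < 2*α*y := by nlinarith
    nlinarith

theorem wright_inequality (a b c d : ℂ) (hdet : a * d - b * c = 1) (hc : c ≠ 0)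
    (z0 : ℂ) (r : ℝ) (hr : 0 < r)
    (himg : (fun z : ℂ => (a * z + b) / (c * z + d)) '' {z : ℂ | z.im < 0} =
      Metric.ball z0 r)
    (hsub : Metric.ball z0 r ⊆ {z : ℂ | 0 < z.im}) :
    0 < (c * conj d).im ∧ 1 ≤ (b * conj c - a * conj d).re := by
  have hmem : ∀ z : ℂ, z.im < 0 → (a * z + b) / (c * z + d) ∈ Metric.ball z0 r := by
    intro z hz
    rw [← himg]
    exact ⟨z, hz, rfl⟩
  have hnsq : 0 < Complex.normSq c := Complex.normSq_pos.mpr hc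
  -- imaginary part of the pole -d/c
  have hpole : ((-d)/c).im = (c * conj d).im / Complex.normSq c := by
    rw [Complex.div_im]
    simp only [Complex.neg_im, Complex.neg_re, Complex.mul_im,
      Complex.conj_re, Complex.conj_im]
    ring
  -- Part 1
  have hk : 0 < (c * conj d).im := by
    by_contra hk
    push_neg at hk
    set K : ℝ := r + ‖a/c - z0‖ + 1 with hK
    have hKpos : 0 < K := by positivity
    set t : ℝ := 1 / (K * Complex.normSq c) with ht
    have htpos : 0 < t := by positivity
    have htK : 1 / (t * Complex.normSq c) = K := by
      rw [ht]; field_simp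
    clear_value K t
    have htne : (t:ℂ) ≠ 0 := by exact_mod_cast htpos.ne'
    set z : ℂ := (-d)/c - (t:ℂ)*Complex.I with hz
    clear_value z
    have hzim : z.im < 0 := by
      have : z.im = (c * conj d).im / Complex.normSq c - t := by
        rw [hz]
        simp [hpole]
      rw [this]
      have : (c * conj d).im / Complex.normSq c ≤ 0 :=
        div_nonpos_of_nonpos_of_nonneg hk hnsq.le
      linarith
    have hfz : (a * z + b) / (c * z + d) = a/c - Complex.I/((t:ℂ) * c^2) := by
      have hzd : c * z + d = -(t:ℂ) * Complex.I * c := by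
        rw [hz]; field_simp; ring
      have hnum : a * z + b = -1/c - a * (t:ℂ) * Complex.I := by
        rw [hz]; field_simp; linear_combination -hdet
      rw [hzd, hnum]
      field_simp
      linear_combination Complex.I_sq
    have hnorm : ‖Complex.I/((t:ℂ) * c^2)‖ = K := by
      rw [norm_div, norm_mul, Complex.norm_I, norm_pow, Complex.norm_real,
        Real.norm_eq_abs, abs_of_pos htpos]
      have h2 : ‖c‖^2 = Complex.normSq c := by
        rw [Complex.sq_norm]
      rw [h2, one_div, ← one_div, htK]
    have hball := hmem z hzim
    rw [Metric.mem_ball, dist_eq_norm, hfz] at hball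
    have htri := norm_sub_norm_le (Complex.I/((t:ℂ) * c^2)) (a/c - z0)
    have hre : ‖Complex.I/((t:ℂ) * c^2) - (a/c - z0)‖ = ‖a/c - Complex.I/((t:ℂ)*c^2) - z0‖ := by
      rw [← norm_neg]; congr 1; ring
    rw [hre, hnorm, hK] at htri
    linarith
  -- Part 2 : nonvanishing of c z + d on the lower half plane
  have hcz : ∀ z : ℂ, z.im < 0 → c * z + d ≠ 0 := by
    intro z hz h
    have hzeq : z = (-d)/c := by
      rw [eq_div_iff hc]; linear_combination h
    rw [hzeq] at hz
    rw [hpole] at hz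
    have : 0 < (c * conj d).im / Complex.normSq c := div_pos hk hnsq
    linarith
  have hupper : ∀ z : ℂ, z.im < 0 → 0 < ((a * z + b) / (c * z + d)).im := by
    intro z hz
    exact hsub (hmem z hz)
  set α : ℝ := (a * conj c).im with hα
  set β : ℝ := (a * conj d - (conj b) * c).im with hβ
  set γ : ℝ := (a * conj d - (conj b) * c).re with hγ
  set δ : ℝ := (b * conj d).im with hδ
  have hre1 : (a*d).re - (b*c).re = 1 := by
    have := congrArg Complex.re hdet
    simpa using this
  have him1 : (a*d).im - (b*c).im = 0 := by
    have := congrArg Complex.im hdet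
    simpa using this
  have hid : γ^2 + β^2 - 4*α*δ = 1 := by
    rw [hα, hβ, hγ, hδ]
    simp only [Complex.mul_re, Complex.mul_im, Complex.sub_re, Complex.sub_im,
      Complex.conj_re, Complex.conj_im] at hre1 him1 ⊢
    nlinarith [hre1, him1, sq_nonneg ((a*d).im)]
  have H : ∀ x y : ℝ, y < 0 → 0 < α*(x^2+y^2) + β*x + γ*y + δ := by
    intro x y hy
    set z : ℂ := ⟨x, y⟩ with hzdef
    have hzim : z.im < 0 := hy
    have h1 := hupper z hzim
    have h2 := hcz z hzim
    have key : ((a*z+b) * conj (c*z+d)).im = α*(x^2+y^2) + β*x + γ*y + δ := by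
      rw [hα, hβ, hγ, hδ]
      simp only [Complex.mul_im, Complex.mul_re, Complex.add_re, Complex.add_im,
        Complex.sub_re, Complex.sub_im, Complex.conj_re, Complex.conj_im, hzdef]
      ring
    have h3 : ((a*z+b) * conj (c*z+d)).im
        = ((a*z+b)/(c*z+d)).im * Complex.normSq (c*z+d) := by
      calc ((a*z+b) * conj (c*z+d)).im
          = ((((a*z+b)/(c*z+d)) * (c*z+d)) * conj (c*z+d)).im := by
            rw [div_mul_cancel₀ _ h2]
        _ = (((a*z+b)/(c*z+d)) * ((Complex.normSq (c*z+d) : ℝ) : ℂ)).im := by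
            rw [mul_assoc, Complex.mul_conj]
        _ = ((a*z+b)/(c*z+d)).im * Complex.normSq (c*z+d) := by
            simp [Complex.mul_im]
    rw [← key, h3]
    exact mul_pos h1 (Complex.normSq_pos.mpr h2)
  have hγle := key_real α β γ δ hid H
  refine ⟨hk, ?_⟩
  have : (b * conj c - a * conj d).re = -γ := by
    rw [hγ]
    simp only [Complex.sub_re, Complex.mul_re, Complex.conj_re, Complex.conj_im]
    ring
  rw [this]
  linarith
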